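/- Let a : [-M,M] → (0,∞) be continuous, x : ℝ → (-M,M) continuous, and η : ℝ → ℝ satisfy η(t) < t and ∫_{η(t)}^{t} a(x(s)) ds = 1 for all t ∈ ℝ. Then η is differentiable on ℝ and η′(t) = a(x(t)) / a(x(η(t))) > 0 for all t ∈ ℝ. -/

import Mathlib

open Set

/-- For the threshold-type delay, determined by `∫_{η(t)}^t a(x(s)) ds = 1` with
`η(t) < t` along a continuous trajectory `x` with values in `(-M,M)`, the map `η`
is differentiable with `η′(t) = a(x(t)) / a(x(η(t))) > 0` for all `t`. -/
theorem threshold_delay_eta_differentiable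
    (M : ℝ) (hM : 0 < M)
    (a : ℝ → ℝ) (ha_cont : ContinuousOn a (Icc (-M) M))
    (ha_pos : ∀ ξ ∈ Icc (-M) M, 0 < a ξ)
    (x : ℝ → ℝ) (hx_cont : Continuous x)
    (hx_range : ∀ t, x t ∈ Ioo (-M) M)
    (η : ℝ → ℝ)
    (hη_lt : ∀ t, η t < t)
    (hη_int : ∀ t, (∫ s in (η t)..t, a (x s)) = 1) :
    ∀ t : ℝ, HasDerivAt η (a (x t) / a (x (η t))) t ∧ 0 < a (x t) / a (x (η t)) := by
  have hx_mem : ∀ s, x s ∈ Icc (-M) M := fun s => Ioo_subset_Icc_self (hx_range s)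
  have hax : Continuous fun s => a (x s) :=
    ha_cont.comp_continuous hx_cont hx_mem
  have hax_pos : ∀ s, 0 < a (x s) := fun s => ha_pos _ (hx_mem s)
  set F : ℝ → ℝ := fun t => ∫ s in (0:ℝ)..t, a (x s) with hFdef
  have hF : ∀ t, HasDerivAt F (a (x t)) t := fun t =>
    (hax.integral_hasStrictDerivAt 0 t).hasDerivAt
  have hFcont : Continuous F := by
    have := fun t => (hF t).continuousAt
    exact continuous_iff_continuousAt.2 this
  have hFmono : StrictMono F := by
    apply strictMono_of_deriv_pos
    intro t
    rw [(hF t).deriv]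
    exact hax_pos t
  -- key identity
  have hkey : ∀ s, F (η s) = F s - 1 := by
    intro s
    have hadd : F (η s) + ∫ u in (η s)..s, a (x u) = F s := by
      exact intervalIntegral.integral_add_adjacent_intervals
        (hax.intervalIntegrable _ _) (hax.intervalIntegrable _ _)
    rw [hη_int s] at hadd
    linarith
  -- lower bound on a ∘ x
  obtain ⟨ξ, hξ, hξmin⟩ := (isCompact_Icc (a := -M) (b := M)).exists_isMinOn
    (nonempty_Icc.2 (by linarith)) ha_cont
  set c : ℝ := a ξ with hc
  have hc_pos : 0 < c := ha_pos ξ hξ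
  have hbound : ∀ s t : ℝ, s ≤ t → c * (t - s) ≤ F t - F s := by
    intro s t hst
    have h1 : F t - F s = ∫ u in s..t, a (x u) := by
      have := intervalIntegral.integral_add_adjacent_intervals
        (hax.intervalIntegrable (μ := MeasureTheory.volume) 0 s)
        (hax.intervalIntegrable (μ := MeasureTheory.volume) s t)
      linarith
    have h2 : (∫ _u in s..t, c) ≤ ∫ u in s..t, a (x u) := by
      apply intervalIntegral.integral_mono_on hst
        (intervalIntegrable_const) (hax.intervalIntegrable _ _)
      intro u _
      exact hξmin (hx_mem u)
    rw [h1]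
    simpa [smul_eq_mul, mul_comm] using h2
  have htop : Filter.Tendsto F Filter.atTop Filter.atTop := by
    apply Filter.tendsto_atTop_mono' _ _ (Filter.tendsto_atTop_add_const_right _ (F 0)
      ((Filter.tendsto_atTop_atTop_of_monotone (fun y z h => by nlinarith) (fun b => ⟨b / c + 1, by nlinarith [mul_div_cancel₀ b hc_pos.ne']⟩) : Filter.Tendsto (fun t : ℝ => c * t) Filter.atTop Filter.atTop)))
    filter_upwards [Filter.eventually_ge_atTop (0:ℝ)] with t ht
    have := hbound 0 t ht
    simp only [sub_zero] at this
    linarith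
  have hbot : Filter.Tendsto F Filter.atBot Filter.atBot := by
    apply Filter.tendsto_atBot_mono' _ _ (Filter.tendsto_atBot_add_const_right _ (F 0)
      ((Filter.tendsto_atBot_atBot_of_monotone (fun y z h => by nlinarith) (fun b => ⟨b / c - 1, by nlinarith [mul_div_cancel₀ b hc_pos.ne']⟩) : Filter.Tendsto (fun t : ℝ => c * t) Filter.atBot Filter.atBot)))
    filter_upwards [Filter.eventually_le_atBot (0:ℝ)] with t ht
    have := hbound t 0 ht
    simp only [sub_zero, zero_sub] at this
    linarith
  have hFsurj : Function.Surjective F := hFcont.surjective htop hbot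
  set e : ℝ ≃o ℝ := StrictMono.orderIsoOfSurjective F hFmono hFsurj with he
  have heF : ∀ t, e t = F t := fun t => rfl
  have hGe : ∀ s, e.symm (F s) = s := fun s => by
    rw [← heF]; exact e.symm_apply_apply s
  have hηeq : ∀ s, η s = e.symm (F s - 1) := by
    intro s
    rw [← hkey s, hGe]
  intro t
  have hpos : 0 < a (x t) / a (x (η t)) := div_pos (hax_pos t) (hax_pos (η t))
  refine ⟨?_, hpos⟩
  -- derivative of the inverse at F t - 1
  have hGcont : ContinuousAt e.symm (F t - 1) := (OrderIso.continuous e.symm).continuousAt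
  have hGval : e.symm (F t - 1) = η t := (hηeq t).symm
  have hG : HasDerivAt (fun y => e.symm y) (a (x (η t)))⁻¹ (F t - 1) := by
    apply HasDerivAt.of_local_left_inverse hGcont
      (by rw [hGval]; exact hF (η t)) (hax_pos (η t)).ne'
    exact Filter.Eventually.of_forall fun y => by
      have := e.apply_symm_apply y
      rw [heF] at this; exact this
  have hcomp : HasDerivAt (fun s => e.symm (F s - 1)) ((a (x (η t)))⁻¹ * a (x t)) t :=
    hG.comp t ((hF t).sub_const 1)
  have : HasDerivAt η ((a (x (η t)))⁻¹ * a (x t)) t := by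
    apply hcomp.congr_of_eventuallyEq
    exact Filter.Eventually.of_forall fun s => hηeq s
  convert this using 1
  field_simp [mul_comm]
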